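/- Let d be a positive integer, let W be a real d×d matrix with spectral norm ‖W‖₂, and let A be a real d×d diagonal matrix each of whose diagonal entries is 0 or 1. Define f : ℝᵈ → ℝᵈ by f(x) = A·W·x. Let Q : ℝᵈ → ℝᵈ be continuously differentiable, and suppose there exist q ≥ 0 and r ≥ 0 such that for all x ∈ ℝᵈ: (i) every component of Q(f(x)) has absolute value at most q, and (ii) the linear map h ↦ f(x) ⊙ (D(Q∘f)(x)·h) has operator norm (with respect to the Euclidean norm) at most r·‖W‖₂, where ⊙ denotes componentwise multiplication and D(Q∘f)(x) is the Fréchet derivative of Q∘f at x. Then for all x, y ∈ ℝᵈ, ‖(y + f(y) ⊙ Q(f(y))) − (x + f(x) ⊙ Q(f(x)))‖₂ ≤ (1 + (q + r)·‖W‖₂)·‖y − x‖₂. -/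

import Mathlib

open scoped Matrix

/-- Componentwise (Hadamard) product of two vectors in Euclidean space. -/
noncomputable def hadamardVec {d : ℕ} (x y : EuclideanSpace ℝ (Fin d)) :
    EuclideanSpace ℝ (Fin d) :=
  (WithLp.equiv 2 (Fin d → ℝ)).symm fun i => x i * y i

lemma hadamardVec_apply {d : ℕ} (x y : EuclideanSpace ℝ (Fin d)) (i : Fin d) :
    hadamardVec x y i = x i * y i := rfl

lemma euclidean_coord_le {d : ℕ} (y : EuclideanSpace ℝ (Fin d)) (i : Fin d) :
    |y i| ≤ ‖y‖ := by
  rw [EuclideanSpace.norm_eq]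
  rw [show |y i| = Real.sqrt (|y i| ^ 2) by rw [Real.sqrt_sq (abs_nonneg _)]]
  apply Real.sqrt_le_sqrt
  rw [sq_abs]
  calc y i ^ 2 = ‖y i‖ ^ 2 := by rw [Real.norm_eq_abs, sq_abs]
    _ ≤ ∑ j, ‖y j‖ ^ 2 :=
      Finset.single_le_sum (f := fun j => ‖y j‖ ^ 2) (fun j _ => by positivity)
        (Finset.mem_univ i)

lemma hadamardVec_norm_le {d : ℕ} (u v : EuclideanSpace ℝ (Fin d)) (c : ℝ)
    (hc : 0 ≤ c) (h : ∀ i, |v i| ≤ c) : ‖hadamardVec u v‖ ≤ c * ‖u‖ := by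
  rw [EuclideanSpace.norm_eq, EuclideanSpace.norm_eq]
  rw [show c * Real.sqrt (∑ i, ‖u i‖ ^ 2) = Real.sqrt (c ^ 2 * ∑ i, ‖u i‖ ^ 2) by
    rw [Real.sqrt_mul (by positivity), Real.sqrt_sq hc]]
  apply Real.sqrt_le_sqrt
  rw [Finset.mul_sum]
  apply Finset.sum_le_sum
  intro i _
  rw [hadamardVec_apply]
  have h1 : ‖u i * v i‖ = ‖u i‖ * |v i| := by rw [norm_mul]; rfl
  have h2 : |v i| ^ 2 ≤ c ^ 2 := by nlinarith [h i, abs_nonneg (v i)]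
  have h3 := mul_le_mul_of_nonneg_left h2 (sq_nonneg ‖u i‖)
  rw [h1, mul_pow]; linarith

lemma hadamardVec_isBoundedBilinear {d : ℕ} :
    IsBoundedBilinearMap ℝ (fun p : EuclideanSpace ℝ (Fin d) × EuclideanSpace ℝ (Fin d) =>
      hadamardVec p.1 p.2) where
  add_left x₁ x₂ y := by
    apply PiLp.ext; intro i
    simp [hadamardVec_apply, PiLp.add_apply, add_mul]
  smul_left c x y := by
    apply PiLp.ext; intro i
    simp [hadamardVec_apply, PiLp.smul_apply, smul_eq_mul]; ring
  add_right x y₁ y₂ := by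
    apply PiLp.ext; intro i
    simp [hadamardVec_apply, PiLp.add_apply, mul_add]
  smul_right c x y := by
    apply PiLp.ext; intro i
    simp [hadamardVec_apply, PiLp.smul_apply, smul_eq_mul]; ring
  bound := by
    refine ⟨1, one_pos, fun x y => ?_⟩
    have := hadamardVec_norm_le x y ‖y‖ (norm_nonneg y) (fun i => euclidean_coord_le y i)
    calc ‖hadamardVec x y‖ ≤ ‖y‖ * ‖x‖ := this
      _ = 1 * ‖x‖ * ‖y‖ := by ring


set_option synthInstance.maxHeartbeats 1000000 in
/-- Theorem 1 of the paper (self-attention as a noise regulator, one residual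
block): with `f(x) = A·W·x` (`A` diagonal with `0/1` entries) and a `C¹`
self-attention map `Q` such that every component of `Q(f(x))` is bounded by `q`
and the linear map `h ↦ f(x) ⊙ D(Q∘f)(x)·h` has Euclidean operator norm at most
`r·‖W‖₂`, the residual layer `x ↦ x + f(x) ⊙ Q(f(x))` is Lipschitz with
constant `1 + (q + r)·‖W‖₂`. -/
theorem attention_noise_regulator (d : ℕ) (hd : 0 < d)
    (W : Matrix (Fin d) (Fin d) ℝ)
    (a : Fin d → ℝ) (ha : ∀ i, a i = 0 ∨ a i = 1)
    (f : EuclideanSpace ℝ (Fin d) → EuclideanSpace ℝ (Fin d))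
    (hfdef : ∀ x, f x =
      Matrix.toEuclideanCLM (𝕜 := ℝ) (Matrix.diagonal a * W) x)
    (Q : EuclideanSpace ℝ (Fin d) → EuclideanSpace ℝ (Fin d))
    (hQsmooth : ContDiff ℝ 1 Q)
    (q r : ℝ) (hq : 0 ≤ q) (hr : 0 ≤ r)
    (hbound : ∀ (x : EuclideanSpace ℝ (Fin d)) (i : Fin d), |Q (f x) i| ≤ q)
    (hderiv : ∀ (x h : EuclideanSpace ℝ (Fin d)),
      ‖hadamardVec (f x) (fderiv ℝ (Q ∘ f) x h)‖ ≤
        r * ‖Matrix.toEuclideanCLM (𝕜 := ℝ) W‖ * ‖h‖) :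
    ∀ x y : EuclideanSpace ℝ (Fin d),
      ‖(y + hadamardVec (f y) (Q (f y))) - (x + hadamardVec (f x) (Q (f x)))‖ ≤
        (1 + (q + r) * ‖Matrix.toEuclideanCLM (𝕜 := ℝ) W‖) * ‖y - x‖ := by
  intro x y
  set T := Matrix.toEuclideanCLM (𝕜 := ℝ) W with hT
  set L := Matrix.toEuclideanCLM (𝕜 := ℝ) (Matrix.diagonal a * W) with hLdef
  have hfE : f = ⇑L := funext hfdef
  -- diagonal matrix has operator norm ≤ 1
  have hdiag : ‖Matrix.toEuclideanCLM (𝕜 := ℝ) (Matrix.diagonal a)‖ ≤ 1 := by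
    apply ContinuousLinearMap.opNorm_le_bound _ zero_le_one
    intro z
    rw [one_mul, EuclideanSpace.norm_eq, EuclideanSpace.norm_eq]
    apply Real.sqrt_le_sqrt
    apply Finset.sum_le_sum
    intro i _
    have hz : (Matrix.toEuclideanCLM (𝕜 := ℝ) (Matrix.diagonal a) z) i = a i * z i := by
      have := congrFun (Matrix.ofLp_toEuclideanCLM (𝕜 := ℝ)
        (Matrix.diagonal a) z) i
      simpa [Matrix.mulVec_diagonal] using this
    rw [hz]
    have hai : |a i| ≤ 1 := by rcases ha i with h | h <;> simp [h]
    have : ‖a i * z i‖ = |a i| * ‖z i‖ := by rw [norm_mul]; rfl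
    rw [this, mul_pow]
    have hai2 : |a i| ^ 2 ≤ 1 := by nlinarith [abs_nonneg (a i)]
    have := mul_le_mul_of_nonneg_right hai2 (sq_nonneg ‖z i‖)
    linarith
  have hL : ‖L‖ ≤ ‖T‖ := by
    have hmul : L = Matrix.toEuclideanCLM (𝕜 := ℝ) (Matrix.diagonal a) * T := by
      rw [hLdef, map_mul]
    calc ‖L‖ ≤ ‖Matrix.toEuclideanCLM (𝕜 := ℝ) (Matrix.diagonal a)‖ * ‖T‖ := by
          rw [hmul]; exact norm_mul_le _ _
      _ ≤ 1 * ‖T‖ := by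
          exact mul_le_mul_of_nonneg_right hdiag (norm_nonneg T)
      _ = ‖T‖ := one_mul _
  have hQf : ContDiff ℝ 1 (Q ∘ f) := by
    rw [hfE]; exact hQsmooth.comp L.contDiff
  have hb := hadamardVec_isBoundedBilinear (d := d)
  set G : EuclideanSpace ℝ (Fin d) → (EuclideanSpace ℝ (Fin d) →L[ℝ] EuclideanSpace ℝ (Fin d)) :=
    fun z => ContinuousLinearMap.id ℝ _ +
      ((hb.deriv (f z, Q (f z))).comp (L.prod (fderiv ℝ (Q ∘ f) z))) with hG
  have key : ∀ z, HasFDerivAt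
      (fun w => w + hadamardVec (f w) (Q (f w))) (G z) z := by
    intro z
    apply (hasFDerivAt_id z).add
    have hfd : HasFDerivAt f L z := by rw [hfE]; exact L.hasFDerivAt
    have hQd : HasFDerivAt (Q ∘ f) (fderiv ℝ (Q ∘ f) z) z :=
      (hQf.differentiable one_ne_zero z).hasFDerivAt
    have hpair : HasFDerivAt (fun w => (f w, (Q ∘ f) w))
        (L.prod (fderiv ℝ (Q ∘ f) z)) z := hfd.prodMk hQd
    exact (hb.hasFDerivAt (f z, Q (f z))).comp z hpair
  have hGnorm : ∀ z, ‖G z‖ ≤ 1 + (q + r) * ‖T‖ := by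
    intro z
    apply ContinuousLinearMap.opNorm_le_bound _ (by positivity)
    intro h
    have happ : G z h = h + (hadamardVec (f z) (fderiv ℝ (Q ∘ f) z h) +
        hadamardVec (L h) (Q (f z))) := by
      simp [hG, IsBoundedBilinearMap.deriv_apply]
    rw [happ]
    have h1 : ‖hadamardVec (f z) (fderiv ℝ (Q ∘ f) z h)‖ ≤ r * ‖T‖ * ‖h‖ := hderiv z h
    have h2 : ‖hadamardVec (L h) (Q (f z))‖ ≤ q * ‖L h‖ :=
      hadamardVec_norm_le _ _ q hq (hbound z)
    have h3 : ‖L h‖ ≤ ‖T‖ * ‖h‖ :=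
      le_trans (L.le_opNorm h) (mul_le_mul_of_nonneg_right hL (norm_nonneg h))
    have h4 : q * ‖L h‖ ≤ q * (‖T‖ * ‖h‖) := mul_le_mul_of_nonneg_left h3 hq
    calc ‖h + (hadamardVec (f z) (fderiv ℝ (Q ∘ f) z h) + hadamardVec (L h) (Q (f z)))‖
        ≤ ‖h‖ + (‖hadamardVec (f z) (fderiv ℝ (Q ∘ f) z h)‖ +
          ‖hadamardVec (L h) (Q (f z))‖) :=
          le_trans (norm_add_le _ _) (by gcongr; exact norm_add_le _ _)
      _ ≤ ‖h‖ + (r * ‖T‖ * ‖h‖ + q * (‖T‖ * ‖h‖)) := by linarith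
      _ = (1 + (q + r) * ‖T‖) * ‖h‖ := by ring
  have := Convex.norm_image_sub_le_of_norm_hasFDerivWithin_le
    (f := fun w => w + hadamardVec (f w) (Q (f w))) (f' := G)
    (fun z _ => (key z).hasFDerivWithinAt) (fun z _ => hGnorm z)
    convex_univ (Set.mem_univ x) (Set.mem_univ y)
  simpa using this
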